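/- For the Lie algebra $B_2 = \mathfrak{so}_5$, the number of distinct weights of the finite-dimensional irreducible module with highest weight $\lambda = \lambda_1\omega_1 + \lambda_2\omega_2$ (with $\lambda_1, \lambda_2 \in \mathbb{N}_0$, where $\alpha_1$ is the long simple root) equals $1 + 2(\lambda_1+\lambda_2) + 2\lambda_1^2 + \lambda_2^2 + 4\lambda_1\lambda_2$. -/

import Mathlib

/-- The simple root `α_i`, written in fundamental-weight (Dynkin-label) coordinates:
its `j`-th Dynkin label is the Cartan matrix entry `A_{ji} = ⟨α_j^∨, α_i⟩`. -/
def colRoot {r : ℕ} (A : Fin r → Fin r → ℤ) (i : Fin r) : Fin r → ℤ := fun j => A j i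

/-- The simple reflection `s_i` on the weight lattice: `s_i(μ) = μ - μ_i α_i`. -/
def simpleRefl {r : ℕ} (A : Fin r → Fin r → ℤ) (i : Fin r) :
    (Fin r → ℤ) → (Fin r → ℤ) :=
  fun μ => μ - μ i • colRoot A i

/-- The Weyl group of the Cartan matrix `A`, realized as the monoid of maps of the weight
lattice generated by the simple reflections (for a finite Weyl group, which consists of
involutions, this closure coincides with the generated group). -/
def weylMonoid {r : ℕ} (A : Fin r → Fin r → ℤ) : Submonoid (Function.End (Fin r → ℤ)) :=
  Submonoid.closure (Set.range (simpleRefl A))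

/-- `μ ≤ λ` in the dominance (root) order: `λ - μ` is a non-negative integer combination
of the simple roots. -/
def rootLE {r : ℕ} (A : Fin r → Fin r → ℤ) (μ lam : Fin r → ℤ) : Prop :=
  ∃ n : Fin r → ℕ, lam = μ + ∑ i, (n i : ℤ) • colRoot A i

/-- The set `P(λ)` of distinct weights of the finite-dimensional irreducible
highest-weight module `L(λ)`: by the classical saturation theorem, for dominant integral
`λ` these are exactly the integral weights `μ` all of whose Weyl conjugates satisfy
`w(μ) ≤ λ` in the dominance order. -/
def weightSet {r : ℕ} (A : Fin r → Fin r → ℤ) (lam : Fin r → ℤ) : Set (Fin r → ℤ) :=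
  {μ | ∀ w ∈ weylMonoid A, rootLE A (w μ) lam}

/-- The Cartan matrix of `B₂ = 𝔰𝔬₅`, with `α₁` the long simple root. -/
def cartanB2 : Fin 2 → Fin 2 → ℤ := ![![2, -1], ![-2, 2]]

namespace B2aux


def sr0 : Function.End (Fin 2 → ℤ) := simpleRefl cartanB2 0
def sr1 : Function.End (Fin 2 → ℤ) := simpleRefl cartanB2 1

lemma sr0_apply (μ : Fin 2 → ℤ) : sr0 μ = ![ -μ 0, μ 1 + 2*μ 0 ] := by
  funext k; fin_cases k <;>
    simp [sr0, simpleRefl, colRoot, cartanB2] <;> ring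

lemma sr1_apply (μ : Fin 2 → ℤ) : sr1 μ = ![ μ 0 + μ 1, -μ 1 ] := by
  funext k; fin_cases k <;>
    simp [sr1, simpleRefl, colRoot, cartanB2] <;> ring

lemma mul_apply (f g : Function.End (Fin 2 → ℤ)) (μ : Fin 2 → ℤ) : (f * g) μ = f (g μ) := rfl
lemma one_apply (μ : Fin 2 → ℤ) : (1 : Function.End (Fin 2 → ℤ)) μ = μ := rfl

lemma rootLE_iff (l1 l2 : ℕ) (ν : Fin 2 → ℤ) :
    rootLE cartanB2 ν ![(l1 : ℤ), (l2 : ℤ)] ↔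
      (2*ν 0 + ν 1 ≤ 2*(l1:ℤ)+l2 ∧ ν 0 + ν 1 ≤ (l1:ℤ)+l2 ∧
        (2:ℤ) ∣ (2*(l1:ℤ)+l2 - (2*ν 0 + ν 1))) := by
  constructor
  · rintro ⟨n, hn⟩
    have h0 := congrFun hn 0
    have h1 := congrFun hn 1
    simp [colRoot, cartanB2, Fin.sum_univ_two] at h0 h1
    refine ⟨?_, ?_, ?_⟩ <;> omega
  · rintro ⟨h1, h2, h3⟩
    refine ⟨![((2*(l1:ℤ)+l2 - (2*ν 0 + ν 1))/2).toNat, (((l1:ℤ)+l2) - ν 0 - ν 1).toNat], ?_⟩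
    funext k
    fin_cases k <;> simp [colRoot, cartanB2, Fin.sum_univ_two] <;> omega

def goodB2 (l1 l2 : ℕ) (μ : Fin 2 → ℤ) : Prop :=
  2*μ 0 + μ 1 ≤ 2*(l1:ℤ)+l2 ∧ -(2*(l1:ℤ)+l2) ≤ 2*μ 0 + μ 1 ∧
  μ 1 ≤ 2*(l1:ℤ)+l2 ∧ -(2*(l1:ℤ)+l2) ≤ μ 1 ∧
  μ 0 + μ 1 ≤ (l1:ℤ)+l2 ∧ -((l1:ℤ)+l2) ≤ μ 0 + μ 1 ∧
  μ 0 ≤ (l1:ℤ)+l2 ∧ -((l1:ℤ)+l2) ≤ μ 0 ∧ (2:ℤ) ∣ (μ 1 + l2)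

lemma sr0_mem : sr0 ∈ weylMonoid cartanB2 := Submonoid.subset_closure ⟨0, rfl⟩
lemma sr1_mem : sr1 ∈ weylMonoid cartanB2 := Submonoid.subset_closure ⟨1, rfl⟩

lemma good_invariant : ∀ w ∈ weylMonoid cartanB2, ∀ ν, goodB2 l1 l2 ν → goodB2 l1 l2 (w ν) := by
  intro w hw
  induction hw using Submonoid.closure_induction with
  | mem x hx =>
    obtain ⟨i, rfl⟩ := hx
    intro ν hν
    fin_cases i
    · show goodB2 l1 l2 (sr0 ν)
      rw [sr0_apply]
      simp only [goodB2, Matrix.cons_val_zero, Matrix.cons_val_one, Matrix.head_cons] at hν ⊢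
      omega
    · show goodB2 l1 l2 (sr1 ν)
      rw [sr1_apply]
      simp only [goodB2, Matrix.cons_val_zero, Matrix.cons_val_one, Matrix.head_cons] at hν ⊢
      omega
  | one => intro ν hν; exact hν
  | mul x y hx hy px py => intro ν hν; exact px (y ν) (py ν hν)

lemma mem_weightSet_iff (l1 l2 : ℕ) (μ : Fin 2 → ℤ) :
    μ ∈ weightSet cartanB2 ![(l1 : ℤ), (l2 : ℤ)] ↔ goodB2 l1 l2 μ := by
  constructor
  · intro h
    have k1 := (rootLE_iff l1 l2 μ).mp (h 1 (one_mem _))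
    have k2 := (rootLE_iff l1 l2 (sr0 μ)).mp (h sr0 sr0_mem)
    have k3 := (rootLE_iff l1 l2 (sr1 μ)).mp (h sr1 sr1_mem)
    have k4 := (rootLE_iff l1 l2 ((sr0*sr1) μ)).mp (h _ (mul_mem sr0_mem sr1_mem))
    have k5 := (rootLE_iff l1 l2 ((sr1*sr0) μ)).mp (h _ (mul_mem sr1_mem sr0_mem))
    have k6 := (rootLE_iff l1 l2 ((sr0*(sr1*sr0)) μ)).mp
      (h _ (mul_mem sr0_mem (mul_mem sr1_mem sr0_mem)))
    have k7 := (rootLE_iff l1 l2 ((sr1*(sr0*sr1)) μ)).mp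
      (h _ (mul_mem sr1_mem (mul_mem sr0_mem sr1_mem)))
    have k8 := (rootLE_iff l1 l2 ((sr0*(sr1*(sr0*sr1))) μ)).mp
      (h _ (mul_mem sr0_mem (mul_mem sr1_mem (mul_mem sr0_mem sr1_mem))))
    simp only [mul_apply, one_apply, sr0_apply, sr1_apply, Matrix.cons_val_zero,
      Matrix.cons_val_one, Matrix.head_cons] at k1 k2 k3 k4 k5 k6 k7 k8
    simp only [goodB2]
    omega
  · intro hg w hw
    have g := good_invariant w hw μ hg
    rw [rootLE_iff]
    simp only [goodB2] at g
    omega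



def dB2 (l1 l2 j : ℕ) : ℕ := (l1 - j) + (j - (l1 + l2))
def cB2 (l1 l2 j : ℕ) : ℕ := (2*l1 + l2) - 2 * dB2 l1 l2 j
def fB2 (l1 l2 j i : ℕ) : Fin 2 → ℤ :=
  ![ (i : ℤ) - j + dB2 l1 l2 j, 2*(j:ℤ) - (2*l1 + l2) ]
def FB2 (l1 l2 : ℕ) : Finset (Fin 2 → ℤ) :=
  (Finset.range (2*l1+l2+1)).biUnion
    (fun j => (Finset.range (cB2 l1 l2 j + 1)).image (fB2 l1 l2 j))

lemma mem_FB2 (l1 l2 : ℕ) (μ : Fin 2 → ℤ) : μ ∈ FB2 l1 l2 ↔ goodB2 l1 l2 μ := by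
  simp only [FB2, Finset.mem_biUnion, Finset.mem_image, Finset.mem_range]
  constructor
  · rintro ⟨j, hj, i, hi, rfl⟩
    simp only [goodB2, fB2, dB2, cB2, Matrix.cons_val_zero, Matrix.cons_val_one,
      Matrix.head_cons] at hi ⊢
    omega
  · intro hg
    simp only [goodB2] at hg
    set j := ((μ 1 + (2*(l1:ℤ)+l2))/2).toNat with hj
    set i := ((2*μ 0 + μ 1 + (cB2 l1 l2 j : ℤ))/2).toNat with hi
    refine ⟨j, ?_, i, ?_, ?_⟩
    · simp only [hj]; omega
    · simp only [hi, hj, cB2, dB2]; omega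
    · funext k
      fin_cases k
      · show ((i : ℤ) - j + dB2 l1 l2 j) = μ 0
        simp only [hi, hj, cB2, dB2]; omega
      · show (2*(j:ℤ) - (2*l1 + l2)) = μ 1
        simp only [hi, hj, cB2, dB2]; omega

lemma card_image (l1 l2 j : ℕ) :
    ((Finset.range (cB2 l1 l2 j + 1)).image (fB2 l1 l2 j)).card = cB2 l1 l2 j + 1 := by
  rw [Finset.card_image_of_injective _ ?_, Finset.card_range]
  intro i i' h
  have := congrFun h 0
  simp only [fB2, Matrix.cons_val_zero] at this
  omega

lemma card_FB2 (l1 l2 : ℕ) :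
    (FB2 l1 l2).card = ∑ j ∈ Finset.range (2*l1+l2+1), (cB2 l1 l2 j + 1) := by
  rw [FB2, Finset.card_biUnion, Finset.sum_congr rfl (fun j _ => card_image l1 l2 j)]
  intro j _ j' _ hjj
  simp only [Finset.disjoint_left, Finset.mem_image, Finset.mem_range]
  rintro μ ⟨i, hi, rfl⟩ ⟨i', hi', h⟩
  have := congrFun h 1
  simp [fB2] at this
  omega

lemma sum_range_add' (f : ℕ → ℕ) (m : ℕ) : ∀ n, ∑ j ∈ Finset.range (m+n), f j
    = ∑ j ∈ Finset.range m, f j + ∑ i ∈ Finset.range n, f (m + i) := by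
  intro n
  induction n with
  | zero => simp
  | succ n ih => rw [← Nat.add_assoc, Finset.sum_range_succ, ih, Finset.sum_range_succ]; omega

lemma sum_lin (k : ℕ) : ∀ n, (∑ j ∈ Finset.range n, (k + 2*j)) + n = n*k + n*n := by
  intro n
  induction n with
  | zero => simp
  | succ n ih =>
    rw [Finset.sum_range_succ]
    have h : (n+1)*k + (n+1)*(n+1) = (n*k + n*n) + (k + 2*n) + 1 := by ring
    omega

lemma sum_cB2 (l1 l2 : ℕ) :
    ∑ j ∈ Finset.range (2*l1+l2+1), (cB2 l1 l2 j + 1)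
      = 1 + 2 * (l1 + l2) + 2 * l1^2 + l2^2 + 4 * l1 * l2 := by
  have e : 2*l1+l2+1 = l1 + ((l2+1) + l1) := by omega
  rw [e, sum_range_add', sum_range_add']
  have h1 : ∑ j ∈ Finset.range l1, (cB2 l1 l2 j + 1)
      = ∑ j ∈ Finset.range l1, ((l2+1) + 2*j) := by
    refine Finset.sum_congr rfl fun j hj => ?_
    rw [Finset.mem_range] at hj
    simp only [cB2, dB2]; omega
  have h2 : ∑ i ∈ Finset.range (l2+1), (cB2 l1 l2 (l1 + i) + 1)
      = ∑ i ∈ Finset.range (l2+1), (2*l1+l2+1) := by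
    refine Finset.sum_congr rfl fun i hi => ?_
    rw [Finset.mem_range] at hi
    simp only [cB2, dB2]; omega
  have h3 : ∑ i ∈ Finset.range l1, (cB2 l1 l2 (l1 + ((l2+1) + i)) + 1)
      = ∑ i ∈ Finset.range l1, ((l2+1) + 2*(l1 - 1 - i)) := by
    refine Finset.sum_congr rfl fun i hi => ?_
    rw [Finset.mem_range] at hi
    simp only [cB2, dB2]; omega
  rw [h1, h2, h3, Finset.sum_range_reflect (fun j => (l2+1) + 2*j) l1, Finset.sum_const,
    Finset.card_range]
  have g1 := sum_lin (l2+1) l1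
  have key : (l1*(l2+1) + l1*l1) + (l2+1)*(2*l1+l2+1) + (l1*(l2+1) + l1*l1)
      = (1 + 2*(l1+l2) + 2*l1^2 + l2^2 + 4*l1*l2) + (l1 + l1) := by ring
  rw [smul_eq_mul]
  omega


end B2aux

/-- for `B₂ = 𝔰𝔬₅` (with `α₁` the long simple root), the number of distinct
weights of the irreducible module `L(λ₁ω₁ + λ₂ω₂)` (with `λ₁, λ₂ ∈ ℕ`) equals
`1 + 2(λ₁+λ₂) + 2λ₁² + λ₂² + 4λ₁λ₂`. -/
theorem stmt_3 (l1 l2 : ℕ) :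
    (weightSet cartanB2 ![(l1 : ℤ), (l2 : ℤ)]).ncard
      = 1 + 2 * (l1 + l2) + 2 * l1^2 + l2^2 + 4 * l1 * l2 := by
  have hset : weightSet cartanB2 ![(l1 : ℤ), (l2 : ℤ)] = ↑(B2aux.FB2 l1 l2) := by
    ext μ
    rw [B2aux.mem_weightSet_iff, Finset.mem_coe, B2aux.mem_FB2]
  rw [hset, Set.ncard_coe_finset, B2aux.card_FB2, B2aux.sum_cB2]
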